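/- The branching-process weights form a probability distribution on 𝒫_D: ∑_{P ∈ 𝒫_D} π(P) = 1. -/
import Mathlib

open Finset

/-- `P` is a partition of the finite type `𝒯`: its blocks are nonempty and every
element of `𝒯` belongs to exactly one block. -/
def IsPartitionOn {𝒯 : Type*} [Fintype 𝒯] [DecidableEq 𝒯] (P : Finset (Finset 𝒯)) : Prop :=
  (∀ T ∈ P, T.Nonempty) ∧ ∀ t : 𝒯, ∃! T, T ∈ P ∧ t ∈ T

/-- A hierarchy of depth `D` on the finite type `𝒯`: a sequence of partitions
`P_0, ..., P_D` of `𝒯` such that `P_0 = {𝒯}`, `P_D = {{t} : t ∈ 𝒯}`, and for each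
`d < D` and each block `T ∈ P_d`, the set `s(T)` of blocks of `P_{d+1}` included in `T`
is a partition of `T` different from `{T}`. -/
structure Hierarchy (𝒯 : Type*) [Fintype 𝒯] [DecidableEq 𝒯] (D : ℕ) where
  part : ℕ → Finset (Finset 𝒯)
  isPartition : ∀ d ≤ D, IsPartitionOn (part d)
  part_zero : part 0 = {(Finset.univ : Finset 𝒯)}
  part_last : part D = Finset.univ.image fun t : 𝒯 => ({t} : Finset 𝒯)
  sibling_cover : ∀ d < D, ∀ T ∈ part d, ∀ t ∈ T, ∃ U ∈ part (d + 1), U ⊆ T ∧ t ∈ U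
  sibling_ne : ∀ d < D, ∀ T ∈ part d, (part (d + 1)).filter (· ⊆ T) ≠ {T}

namespace Hierarchy

variable {𝒯 : Type*} [Fintype 𝒯] [DecidableEq 𝒯] {D : ℕ}

/-- The siblings `s(T)` of a block `T ∈ P_d`: the blocks of `P_{d+1}` included in `T`. -/
def siblings (H : Hierarchy 𝒯 D) (d : ℕ) (T : Finset 𝒯) : Finset (Finset 𝒯) :=
  (H.part (d + 1)).filter (· ⊆ T)

/-- The family `P_0^D = ⋃_{d=0}^D P_d` of all sets appearing in the hierarchy. -/
def levels (H : Hierarchy 𝒯 D) : Finset (Finset 𝒯) :=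
  (Finset.range (D + 1)).biUnion H.part

open Classical in
/-- The collection `𝒫_D` of all partitions of `𝒯` whose blocks all belong to `P_0^D`. -/
noncomputable def parts (H : Hierarchy 𝒯 D) : Finset (Finset (Finset 𝒯)) :=
  H.levels.powerset.filter IsPartitionOn

open Classical in
/-- The ancestors `P° = {T ∈ P_0^D : ∃ V ∈ P, V ⊊ T}` of a partition `P`. -/
noncomputable def ancestors (H : Hierarchy 𝒯 D) (P : Finset (Finset 𝒯)) :
    Finset (Finset 𝒯) :=
  H.levels.filter fun T => ∃ V ∈ P, V ⊂ T

/-- The branching-process weight `π(P) = ∏_{T ∈ P} (1 - ε_T) · ∏_{T ∈ P°} ε_T`. -/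
noncomputable def weight (H : Hierarchy 𝒯 D) (ε : Finset 𝒯 → ℝ)
    (P : Finset (Finset 𝒯)) : ℝ :=
  (∏ T ∈ P, (1 - ε T)) * ∏ T ∈ H.ancestors P, ε T

/-! ### Auxiliary development -/

lemma mem_levels {H : Hierarchy 𝒯 D} {V : Finset 𝒯} :
    V ∈ H.levels ↔ ∃ e ≤ D, V ∈ H.part e := by
  simp only [levels, Finset.mem_biUnion, Finset.mem_range, Nat.lt_succ_iff]

open Classical in
/-- Partitions of a block `T` with all blocks in `P_0^D` and included in `T`. -/
noncomputable def subParts (H : Hierarchy 𝒯 D) (T : Finset 𝒯) :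
    Finset (Finset (Finset 𝒯)) :=
  (H.levels.filter (· ⊆ T)).powerset.filter fun P =>
    (∀ V ∈ P, V.Nonempty) ∧ ∀ t ∈ T, ∃! V, V ∈ P ∧ t ∈ V

open Classical in
/-- Ancestors relative to a block `T`. -/
noncomputable def subAnc (H : Hierarchy 𝒯 D) (T : Finset 𝒯) (P : Finset (Finset 𝒯)) :
    Finset (Finset 𝒯) :=
  (H.levels.filter (· ⊆ T)).filter fun W => ∃ V ∈ P, V ⊂ W

/-- Relative weight. -/
noncomputable def subWeight (H : Hierarchy 𝒯 D) (ε : Finset 𝒯 → ℝ) (T : Finset 𝒯)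
    (P : Finset (Finset 𝒯)) : ℝ :=
  (∏ V ∈ P, (1 - ε V)) * ∏ W ∈ H.subAnc T P, ε W

lemma mem_subParts {H : Hierarchy 𝒯 D} {T : Finset 𝒯} {P : Finset (Finset 𝒯)} :
    P ∈ H.subParts T ↔ (∀ V ∈ P, V ∈ H.levels ∧ V ⊆ T) ∧
      (∀ V ∈ P, V.Nonempty) ∧ ∀ t ∈ T, ∃! V, V ∈ P ∧ t ∈ V := by
  classical
  simp only [subParts, Finset.mem_filter, Finset.mem_powerset, Finset.subset_iff,
    Finset.mem_filter, and_assoc]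

lemma mem_subAnc {H : Hierarchy 𝒯 D} {T : Finset 𝒯} {P : Finset (Finset 𝒯)}
    {W : Finset 𝒯} :
    W ∈ H.subAnc T P ↔ W ∈ H.levels ∧ W ⊆ T ∧ ∃ V ∈ P, V ⊂ W := by
  classical
  simp only [subAnc, Finset.mem_filter, and_assoc]

/-- Laminarity: a block at a deeper level meeting a block at a shallower level
is included in it. -/
lemma subset_of_level_le (H : Hierarchy 𝒯 D) {d e : ℕ} (hde : d ≤ e) (heD : e ≤ D)
    {T V : Finset 𝒯} {t : 𝒯} (hT : T ∈ H.part d) (hV : V ∈ H.part e)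
    (ht : t ∈ T) (htV : t ∈ V) : V ⊆ T := by
  induction e, hde using Nat.le_induction generalizing V with
  | base =>
    obtain ⟨-, huniq⟩ := H.isPartition d heD
    have : V = T := (huniq t).unique ⟨hV, htV⟩ ⟨hT, ht⟩
    exact this ▸ subset_rfl
  | succ e hde ih =>
    obtain ⟨-, huniq⟩ := H.isPartition e (by omega)
    obtain ⟨W, hW, -⟩ := huniq t
    have hWT : W ⊆ T := ih (by omega) hW.1 hW.2
    obtain ⟨U, hU, hUW, htU⟩ := H.sibling_cover e (by omega) W hW.1 t hW.2
    obtain ⟨-, huniq'⟩ := H.isPartition (e + 1) heD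
    have hVU : V = U := (huniq' t).unique ⟨hV, htV⟩ ⟨hU, htU⟩
    exact hVU ▸ hUW.trans hWT

lemma notMem_part_succ (H : Hierarchy 𝒯 D) {d : ℕ} (hd : d < D) {T : Finset 𝒯}
    (hT : T ∈ H.part d) : T ∉ H.part (d + 1) := by
  intro h
  apply H.sibling_ne d hd T hT
  ext U
  simp only [Finset.mem_filter, Finset.mem_singleton]
  constructor
  · rintro ⟨hU, hUT⟩
    obtain ⟨hne, huniq⟩ := H.isPartition (d + 1) (by omega)
    obtain ⟨t, htU⟩ := hne U hU
    exact (huniq t).unique ⟨hU, htU⟩ ⟨h, hUT htU⟩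
  · rintro rfl; exact ⟨h, subset_rfl⟩

lemma notMem_part_of_lt (H : Hierarchy 𝒯 D) {d e : ℕ} (hde : d < e) (heD : e ≤ D)
    {T : Finset 𝒯} (hT : T ∈ H.part d) : T ∉ H.part e := by
  intro h
  have hdD : d < D := lt_of_lt_of_le hde heD
  obtain ⟨hne, -⟩ := H.isPartition d (by omega)
  obtain ⟨t, htT⟩ := hne T hT
  obtain ⟨U, hU, hUT, htU⟩ := H.sibling_cover d hdD T hT t htT
  have hTU : T ⊆ U := H.subset_of_level_le (by omega) heD hU h htU htT
  have : T = U := subset_antisymm hTU hUT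
  exact H.notMem_part_succ hdD hT (this ▸ hU)

/-- Any nonempty block of the hierarchy included in a block at level `d`
lives at some level `e ≥ d`. -/
lemma level_ge_of_subset (H : Hierarchy 𝒯 D) {d : ℕ} (hdD : d ≤ D) {T : Finset 𝒯}
    (hT : T ∈ H.part d) {V : Finset 𝒯} (hV : V ∈ H.levels) (hVT : V ⊆ T)
    (hVne : V.Nonempty) : ∃ e, d ≤ e ∧ e ≤ D ∧ V ∈ H.part e := by
  obtain ⟨e, heD, hVe⟩ := mem_levels.1 hV
  refine ⟨e, ?_, heD, hVe⟩
  by_contra hlt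
  push_neg at hlt
  obtain ⟨t, htV⟩ := hVne
  have hTV : T ⊆ V := H.subset_of_level_le (le_of_lt hlt) hdD hVe hT htV (hVT htV)
  have : V = T := subset_antisymm hVT hTV
  exact H.notMem_part_of_lt hlt hdD (this ▸ hVe) hT

lemma sibling_unique (H : Hierarchy 𝒯 D) {d : ℕ} (hd : d < D) {T : Finset 𝒯}
    (hT : T ∈ H.part d) {t : 𝒯} (ht : t ∈ T) :
    ∃! U, U ∈ H.siblings d T ∧ t ∈ U := by
  obtain ⟨U, hU, hUT, htU⟩ := H.sibling_cover d hd T hT t ht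
  refine ⟨U, ⟨Finset.mem_filter.2 ⟨hU, hUT⟩, htU⟩, ?_⟩
  rintro U' ⟨hU', htU'⟩
  obtain ⟨-, huniq⟩ := H.isPartition (d + 1) (by omega)
  exact (huniq t).unique ⟨(Finset.mem_filter.1 hU').1, htU'⟩ ⟨hU, htU⟩

lemma sibling_props (H : Hierarchy 𝒯 D) {d : ℕ} (hd : d < D) {T : Finset 𝒯}
    (hT : T ∈ H.part d) {U : Finset 𝒯} (hU : U ∈ H.siblings d T) :
    U ∈ H.part (d + 1) ∧ U ⊆ T ∧ U ≠ T ∧ U.Nonempty := by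
  obtain ⟨hU1, hU2⟩ := Finset.mem_filter.1 hU
  refine ⟨hU1, hU2, ?_, (H.isPartition (d + 1) (by omega)).1 U hU1⟩
  rintro rfl
  exact H.notMem_part_succ hd hT hU1

lemma siblings_disjoint (H : Hierarchy 𝒯 D) {d : ℕ} (hd : d < D) {T : Finset 𝒯}
    {U U' : Finset 𝒯} (hU : U ∈ H.siblings d T) (hU' : U' ∈ H.siblings d T)
    (hne : U ≠ U') {t : 𝒯} (htU : t ∈ U) (htU' : t ∈ U') : False := by
  obtain ⟨-, huniq⟩ := H.isPartition (d + 1) (by omega)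
  exact hne ((huniq t).unique ⟨(Finset.mem_filter.1 hU).1, htU⟩
    ⟨(Finset.mem_filter.1 hU').1, htU'⟩)

/-- Each block of a subpartition of `T` (with `T ∉ P`) is contained in a unique
sibling of `T`. -/
lemma block_subset_sibling (H : Hierarchy 𝒯 D) {d : ℕ} (hd : d < D) {T : Finset 𝒯}
    (hT : T ∈ H.part d) {P : Finset (Finset 𝒯)} (hP : P ∈ H.subParts T)
    (hTP : T ∉ P) {V : Finset 𝒯} (hV : V ∈ P) :
    ∃ U ∈ H.siblings d T, V ⊆ U := by
  obtain ⟨hlev, hne, -⟩ := mem_subParts.1 hP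
  obtain ⟨hVlev, hVT⟩ := hlev V hV
  have hVne : V.Nonempty := hne V hV
  obtain ⟨t, htV⟩ := hVne
  obtain ⟨e, hde, heD, hVe⟩ := H.level_ge_of_subset (by omega) hT hVlev hVT (hne V hV)
  obtain ⟨U, hU, hUT, htU⟩ := H.sibling_cover d hd T hT t (hVT htV)
  have hde' : d + 1 ≤ e := by
    rcases Nat.lt_or_ge d e with h | h
    · omega
    · exfalso
      have hed : d = e := by omega
      subst hed
      obtain ⟨-, huniq⟩ := H.isPartition d (by omega)
      exact hTP (((huniq t).unique ⟨hVe, htV⟩ ⟨hT, hVT htV⟩) ▸ hV)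
  have : V ⊆ U := H.subset_of_level_le hde' heD hU hVe htU htV
  exact ⟨U, Finset.mem_filter.2 ⟨hU, hUT⟩, this⟩

/-- Restriction of a subpartition of `T` to a sibling `U` is a subpartition of `U`. -/
lemma restrict_mem_subParts (H : Hierarchy 𝒯 D) {d : ℕ} (hd : d < D) {T : Finset 𝒯}
    (hT : T ∈ H.part d) {P : Finset (Finset 𝒯)} (hP : P ∈ H.subParts T)
    (hTP : T ∉ P) {U : Finset 𝒯} (hU : U ∈ H.siblings d T) :
    P.filter (· ⊆ U) ∈ H.subParts U := by
  obtain ⟨hlev, hne, hcov⟩ := mem_subParts.1 hP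
  obtain ⟨hU1, hUT, -, -⟩ := H.sibling_props hd hT hU
  rw [mem_subParts]
  refine ⟨?_, ?_, ?_⟩
  · intro V hV
    obtain ⟨hVP, hVU⟩ := Finset.mem_filter.1 hV
    exact ⟨(hlev V hVP).1, hVU⟩
  · intro V hV
    exact hne V (Finset.mem_filter.1 hV).1
  · intro t htU
    obtain ⟨V, ⟨hVP, htV⟩, hVuniq⟩ := hcov t (hUT htU)
    obtain ⟨U', hU', hVU'⟩ := H.block_subset_sibling hd hT hP hTP hVP
    have : U' = U := by
      by_contra hne'
      exact H.siblings_disjoint hd hU' hU hne' (hVU' htV) htU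
    refine ⟨V, ⟨Finset.mem_filter.2 ⟨hVP, this ▸ hVU'⟩, htV⟩, ?_⟩
    rintro V' ⟨hV', htV'⟩
    exact hVuniq V' ⟨(Finset.mem_filter.1 hV').1, htV'⟩

/-- Decomposition of blocks: `P` is the disjoint union of its restrictions. -/
lemma blocks_biUnion (H : Hierarchy 𝒯 D) {d : ℕ} (hd : d < D) {T : Finset 𝒯}
    (hT : T ∈ H.part d) {P : Finset (Finset 𝒯)} (hP : P ∈ H.subParts T)
    (hTP : T ∉ P) :
    (H.siblings d T).attach.biUnion (fun U => P.filter (· ⊆ U.1)) = P := by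
  ext V
  simp only [Finset.mem_biUnion, Finset.mem_attach, Finset.mem_filter, true_and,
    Subtype.exists, exists_prop]
  constructor
  · rintro ⟨U, hU, hVP, -⟩; exact hVP
  · intro hV
    obtain ⟨U, hU, hVU⟩ := H.block_subset_sibling hd hT hP hTP hV
    exact ⟨U, hU, hV, hVU⟩

lemma restrict_pairwiseDisjoint (H : Hierarchy 𝒯 D) {d : ℕ} (hd : d < D)
    {T : Finset 𝒯} {P : Finset (Finset 𝒯)} (hP : P ∈ H.subParts T) :
    (↑(H.siblings d T).attach : Set {x // x ∈ H.siblings d T}).PairwiseDisjoint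
      (fun U => P.filter (· ⊆ U.1)) := by
  intro U _ U' _ hne
  simp only [Function.onFun, Finset.disjoint_left, Finset.mem_filter]
  rintro V ⟨hVP, hVU⟩ ⟨-, hVU'⟩
  obtain ⟨-, hne', -⟩ := mem_subParts.1 hP
  obtain ⟨t, htV⟩ := hne' V hVP
  exact H.siblings_disjoint hd U.2 U'.2 (fun h => hne (Subtype.ext h)) (hVU htV) (hVU' htV)

/-- `T` together with the relative ancestors of the restrictions gives the ancestors. -/
lemma subAnc_decomp (H : Hierarchy 𝒯 D) {d : ℕ} (hd : d < D) {T : Finset 𝒯}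
    (hT : T ∈ H.part d) {P : Finset (Finset 𝒯)} (hP : P ∈ H.subParts T)
    (hTP : T ∉ P) :
    H.subAnc T P = insert T
      ((H.siblings d T).attach.biUnion fun U => H.subAnc U.1 (P.filter (· ⊆ U.1))) := by
  obtain ⟨hlev, hne, hcov⟩ := mem_subParts.1 hP
  have hTne : T.Nonempty := (H.isPartition d (by omega)).1 T hT
  ext W
  simp only [Finset.mem_insert, Finset.mem_biUnion, Finset.mem_attach, true_and,
    Subtype.exists, exists_prop, mem_subAnc]
  constructor
  · rintro ⟨hWlev, hWT, V, hVP, hVW⟩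
    by_cases hWeqT : W = T
    · exact Or.inl hWeqT
    right
    have hWne : W.Nonempty := Finset.Nonempty.mono hVW.subset (hne V hVP)
    obtain ⟨e, hde, heD, hWe⟩ := H.level_ge_of_subset (by omega) hT hWlev hWT hWne
    obtain ⟨t, htW⟩ := hWne
    have hde' : d + 1 ≤ e := by
      rcases Nat.lt_or_ge d e with h | h
      · omega
      · exfalso
        have hed : d = e := by omega
        subst hed
        obtain ⟨-, huniq⟩ := H.isPartition d (by omega)
        exact hWeqT ((huniq t).unique ⟨hWe, htW⟩ ⟨hT, hWT htW⟩)
    obtain ⟨U, hU, hUT, htU⟩ := H.sibling_cover d hd T hT t (hWT htW)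
    have hWU : W ⊆ U := H.subset_of_level_le hde' heD hU hWe htU htW
    refine ⟨U, Finset.mem_filter.2 ⟨hU, hUT⟩, hWlev, hWU, V, ?_, hVW⟩
    exact Finset.mem_filter.2 ⟨hVP, hVW.subset.trans hWU⟩
  · rintro (rfl | ⟨U, hU, hWlev, hWU, V, hVP, hVW⟩)
    · obtain ⟨t, htT⟩ := hTne
      obtain ⟨V, ⟨hVP, htV⟩, -⟩ := hcov t htT
      refine ⟨mem_levels.2 ⟨d, by omega, hT⟩, subset_rfl, V, hVP, ?_⟩
      exact lt_of_le_of_ne (hlev V hVP).2 (fun h => hTP (h ▸ hVP))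
    · obtain ⟨-, hUT, -, -⟩ := H.sibling_props hd hT hU
      exact ⟨hWlev, hWU.trans hUT, V, (Finset.mem_filter.1 hVP).1, hVW⟩

lemma T_notMem_biUnion_subAnc (H : Hierarchy 𝒯 D) {d : ℕ} (hd : d < D)
    {T : Finset 𝒯} (hT : T ∈ H.part d) {P : Finset (Finset 𝒯)} :
    T ∉ (H.siblings d T).attach.biUnion
      fun U => H.subAnc U.1 (P.filter (· ⊆ U.1)) := by
  simp only [Finset.mem_biUnion, Finset.mem_attach, true_and, Subtype.exists, exists_prop]
  rintro ⟨U, hU, hanc⟩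
  obtain ⟨-, hTU, -⟩ := mem_subAnc.1 hanc
  obtain ⟨-, hUT, hUneT, -⟩ := H.sibling_props hd hT hU
  exact hUneT (subset_antisymm hUT hTU)

lemma subAnc_pairwiseDisjoint (H : Hierarchy 𝒯 D) {d : ℕ} (hd : d < D)
    {T : Finset 𝒯} {P : Finset (Finset 𝒯)} (hP : P ∈ H.subParts T) :
    (↑(H.siblings d T).attach : Set {x // x ∈ H.siblings d T}).PairwiseDisjoint
      (fun U => H.subAnc U.1 (P.filter (· ⊆ U.1))) := by
  intro U _ U' _ hne
  simp only [Function.onFun, Finset.disjoint_left]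
  intro W hW hW'
  obtain ⟨-, hWU, V, hVP, hVW⟩ := mem_subAnc.1 hW
  obtain ⟨-, hWU', -⟩ := mem_subAnc.1 hW'
  obtain ⟨-, hne', -⟩ := mem_subParts.1 hP
  obtain ⟨t, htV⟩ := hne' V (Finset.mem_filter.1 hVP).1
  have htW : t ∈ W := hVW.subset htV
  exact H.siblings_disjoint hd U.2 U'.2 (fun h => hne (Subtype.ext h)) (hWU htW) (hWU' htW)

/-- Weight factorization when `T ∉ P`. -/
lemma subWeight_factor (H : Hierarchy 𝒯 D) (ε : Finset 𝒯 → ℝ) {d : ℕ} (hd : d < D)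
    {T : Finset 𝒯} (hT : T ∈ H.part d) {P : Finset (Finset 𝒯)}
    (hP : P ∈ H.subParts T) (hTP : T ∉ P) :
    H.subWeight ε T P =
      ε T * ∏ U ∈ (H.siblings d T).attach, H.subWeight ε U.1 (P.filter (· ⊆ U.1)) := by
  unfold subWeight
  have h1 : (∏ V ∈ P, (1 - ε V)) =
      ∏ U ∈ (H.siblings d T).attach, ∏ V ∈ P.filter (· ⊆ U.1), (1 - ε V) := by
    rw [← Finset.prod_biUnion (H.restrict_pairwiseDisjoint hd hP),
      H.blocks_biUnion hd hT hP hTP]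
  have h2 : (∏ W ∈ H.subAnc T P, ε W) =
      ε T * ∏ U ∈ (H.siblings d T).attach,
        ∏ W ∈ H.subAnc U.1 (P.filter (· ⊆ U.1)), ε W := by
    rw [H.subAnc_decomp hd hT hP hTP,
      Finset.prod_insert (H.T_notMem_biUnion_subAnc hd hT),
      Finset.prod_biUnion (H.subAnc_pairwiseDisjoint hd hP)]
  rw [h1, h2, Finset.prod_mul_distrib]
  ring

/-- The trivial subpartition `{T}`. -/
lemma singleton_mem_subParts (H : Hierarchy 𝒯 D) {d : ℕ} (hdD : d ≤ D) {T : Finset 𝒯}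
    (hT : T ∈ H.part d) : ({T} : Finset (Finset 𝒯)) ∈ H.subParts T := by
  have hTne : T.Nonempty := (H.isPartition d hdD).1 T hT
  rw [mem_subParts]
  refine ⟨?_, ?_, ?_⟩
  · intro V hV
    rw [Finset.mem_singleton] at hV
    subst hV
    exact ⟨mem_levels.2 ⟨d, hdD, hT⟩, subset_rfl⟩
  · intro V hV
    rw [Finset.mem_singleton] at hV; subst hV; exact hTne
  · intro t ht
    refine ⟨T, ⟨Finset.mem_singleton_self T, ht⟩, ?_⟩
    rintro V ⟨hV, -⟩
    exact Finset.mem_singleton.1 hV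

lemma eq_singleton_of_mem (H : Hierarchy 𝒯 D) {T : Finset 𝒯} {P : Finset (Finset 𝒯)}
    (hP : P ∈ H.subParts T) (hTP : T ∈ P) : P = {T} := by
  obtain ⟨hlev, hne, hcov⟩ := mem_subParts.1 hP
  ext V
  rw [Finset.mem_singleton]
  constructor
  · intro hV
    obtain ⟨t, htV⟩ := hne V hV
    exact (hcov t ((hlev V hV).2 htV)).unique ⟨hV, htV⟩ ⟨hTP, (hlev V hV).2 htV⟩
  · rintro rfl; exact hTP

lemma subAnc_singleton (H : Hierarchy 𝒯 D) {T : Finset 𝒯} :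
    H.subAnc T {T} = ∅ := by
  ext W
  simp only [mem_subAnc, Finset.mem_singleton, Finset.notMem_empty, iff_false, not_and]
  rintro - hWT ⟨V, rfl, hVW⟩
  exact absurd (subset_antisymm hVW.subset hWT) hVW.ne

lemma subWeight_singleton (H : Hierarchy 𝒯 D) (ε : Finset 𝒯 → ℝ) {T : Finset 𝒯} :
    H.subWeight ε T {T} = 1 - ε T := by
  rw [subWeight, subAnc_singleton, Finset.prod_empty, Finset.prod_singleton, mul_one]

/-- The gluing map. -/
noncomputable def glue (H : Hierarchy 𝒯 D) (d : ℕ) (T : Finset 𝒯)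
    (p : ∀ U ∈ H.siblings d T, Finset (Finset 𝒯)) : Finset (Finset 𝒯) :=
  (H.siblings d T).attach.biUnion fun U => p U.1 U.2

lemma glue_mem (H : Hierarchy 𝒯 D) {d : ℕ} (hd : d < D) {T : Finset 𝒯}
    (hT : T ∈ H.part d)
    {p : ∀ U ∈ H.siblings d T, Finset (Finset 𝒯)}
    (hp : ∀ U (hU : U ∈ H.siblings d T), p U hU ∈ H.subParts U) :
    H.glue d T p ∈ H.subParts T ∧ T ∉ H.glue d T p := by
  have hmem : ∀ {V}, V ∈ H.glue d T p ↔
      ∃ U, ∃ hU : U ∈ H.siblings d T, V ∈ p U hU := by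
    intro V
    simp only [glue, Finset.mem_biUnion, Finset.mem_attach, true_and, Subtype.exists,
      exists_prop, exists_and_right]
  constructor
  · rw [mem_subParts]
    refine ⟨?_, ?_, ?_⟩
    · intro V hV
      obtain ⟨U, hU, hVU⟩ := hmem.1 hV
      obtain ⟨hl, hVsub⟩ := (mem_subParts.1 (hp U hU)).1 V hVU
      obtain ⟨-, hUT, -, -⟩ := H.sibling_props hd hT hU
      exact ⟨hl, hVsub.trans hUT⟩
    · intro V hV
      obtain ⟨U, hU, hVU⟩ := hmem.1 hV
      exact (mem_subParts.1 (hp U hU)).2.1 V hVU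
    · intro t ht
      obtain ⟨U, ⟨hU, htU⟩, hUuniq⟩ := H.sibling_unique hd hT ht
      obtain ⟨-, -, hcov⟩ := mem_subParts.1 (hp U hU)
      obtain ⟨V, ⟨hVp, htV⟩, hVuniq⟩ := hcov t htU
      refine ⟨V, ⟨hmem.2 ⟨U, hU, hVp⟩, htV⟩, ?_⟩
      rintro V' ⟨hV', htV'⟩
      obtain ⟨U', hU', hV'U'⟩ := hmem.1 hV'
      have htU' : t ∈ U' := ((mem_subParts.1 (hp U' hU')).1 V' hV'U').2 htV'
      have : U' = U := hUuniq U' ⟨hU', htU'⟩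
      subst this
      exact hVuniq V' ⟨hV'U', htV'⟩
  · intro hTglue
    obtain ⟨U, hU, hTU⟩ := hmem.1 hTglue
    obtain ⟨-, hUT, hUneT, -⟩ := H.sibling_props hd hT hU
    have : T ⊆ U := ((mem_subParts.1 (hp U hU)).1 T hTU).2
    exact hUneT (subset_antisymm hUT this)

lemma glue_restrict (H : Hierarchy 𝒯 D) {d : ℕ} (hd : d < D) {T : Finset 𝒯}
    (hT : T ∈ H.part d)
    {p : ∀ U ∈ H.siblings d T, Finset (Finset 𝒯)}
    (hp : ∀ U (hU : U ∈ H.siblings d T), p U hU ∈ H.subParts U)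
    {U : Finset 𝒯} (hU : U ∈ H.siblings d T) :
    (H.glue d T p).filter (· ⊆ U) = p U hU := by
  ext V
  simp only [Finset.mem_filter, glue, Finset.mem_biUnion, Finset.mem_attach, true_and,
    Subtype.exists, exists_prop, exists_and_right]
  constructor
  · rintro ⟨⟨U', hU', hV⟩, hVU⟩
    obtain ⟨hVlev, hVU'⟩ := (mem_subParts.1 (hp U' hU')).1 V hV
    have hVne : V.Nonempty := (mem_subParts.1 (hp U' hU')).2.1 V hV
    obtain ⟨t, htV⟩ := hVne
    have : U' = U := by
      by_contra hne
      exact H.siblings_disjoint hd hU' hU hne (hVU' htV) (hVU htV)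
    subst this
    exact hV
  · intro hV
    exact ⟨⟨U, hU, hV⟩, ((mem_subParts.1 (hp U hU)).1 V hV).2⟩

/-- Main induction: the relative weights over subpartitions of a block sum to 1. -/
lemma subWeight_sum_eq_one (H : Hierarchy 𝒯 D) (ε : Finset 𝒯 → ℝ)
    (hεD : ∀ T ∈ H.part D, ε T = 0) :
    ∀ n d, d + n = D → ∀ T ∈ H.part d,
      ∑ P ∈ H.subParts T, H.subWeight ε T P = 1 := by
  intro n
  induction n with
  | zero =>
    intro d hdD T hT
    rw [show d = D by omega] at hT
    have hsub : H.subParts T = {({T} : Finset (Finset 𝒯))} := by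
      ext P
      rw [Finset.mem_singleton]
      constructor
      · intro hP
        apply H.eq_singleton_of_mem hP
        obtain ⟨hlev, hne, hcov⟩ := mem_subParts.1 hP
        have hTne : T.Nonempty := (H.isPartition D le_rfl).1 T hT
        obtain ⟨t, htT⟩ := hTne
        obtain ⟨V, ⟨hVP, htV⟩, -⟩ := hcov t htT
        obtain ⟨e, heD, heD', hVe⟩ :=
          H.level_ge_of_subset le_rfl hT (hlev V hVP).1 (hlev V hVP).2 (hne V hVP)
        rw [show e = D by omega] at hVe
        obtain ⟨-, huniq⟩ := H.isPartition D le_rfl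
        have : V = T := (huniq t).unique ⟨hVe, htV⟩ ⟨hT, htT⟩
        exact this ▸ hVP
      · rintro rfl
        exact H.singleton_mem_subParts le_rfl hT
    rw [hsub, Finset.sum_singleton, subWeight_singleton, hεD T hT, sub_zero]
  | succ n ih =>
    intro d hdD T hT
    have hd : d < D := by omega
    -- split off the trivial partition {T}
    have hsplit : H.subParts T =
        insert ({T} : Finset (Finset 𝒯)) ((H.subParts T).filter (T ∉ ·)) := by
      ext P
      simp only [Finset.mem_insert, Finset.mem_filter]
      constructor
      · intro hP
        by_cases hTP : T ∈ P
        · exact Or.inl (H.eq_singleton_of_mem hP hTP)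
        · exact Or.inr ⟨hP, hTP⟩
      · rintro (rfl | ⟨hP, -⟩)
        · exact H.singleton_mem_subParts (by omega) hT
        · exact hP
    have hnotmem : ({T} : Finset (Finset 𝒯)) ∉ (H.subParts T).filter (T ∉ ·) := by
      intro h
      rw [Finset.mem_filter] at h
      exact h.2 (Finset.mem_singleton_self T)
    rw [hsplit, Finset.sum_insert hnotmem, subWeight_singleton]
    -- the nontrivial part
    have hfactor : ∑ P ∈ (H.subParts T).filter (T ∉ ·), H.subWeight ε T P
        = ε T := by
      have hbij : ∑ P ∈ (H.subParts T).filter (T ∉ ·), H.subWeight ε T P =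
          ∑ p ∈ (H.siblings d T).pi (fun U => H.subParts U),
            ε T * ∏ U ∈ (H.siblings d T).attach,
              H.subWeight ε U.1 (p U.1 U.2) := by
        refine Finset.sum_bij'
          (fun P _ => fun U _ => P.filter (· ⊆ U))
          (fun p _ => H.glue d T p) ?_ ?_ ?_ ?_ ?_
        · intro P hP
          obtain ⟨hP', hTP⟩ := Finset.mem_filter.1 hP
          rw [Finset.mem_pi]
          intro U hU
          exact H.restrict_mem_subParts hd hT hP' hTP hU
        · intro p hp
          rw [Finset.mem_pi] at hp
          obtain ⟨h1, h2⟩ := H.glue_mem hd hT hp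
          exact Finset.mem_filter.2 ⟨h1, h2⟩
        · intro P hP
          obtain ⟨hP', hTP⟩ := Finset.mem_filter.1 hP
          exact H.blocks_biUnion hd hT hP' hTP
        · intro p hp
          rw [Finset.mem_pi] at hp
          funext U hU
          exact H.glue_restrict hd hT hp hU
        · intro P hP
          obtain ⟨hP', hTP⟩ := Finset.mem_filter.1 hP
          exact H.subWeight_factor ε hd hT hP' hTP
      rw [hbij, ← Finset.mul_sum, ← Finset.prod_sum]
      have hprod : ∀ U ∈ H.siblings d T,
          ∑ Q ∈ H.subParts U, H.subWeight ε U Q = 1 := by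
        intro U hU
        obtain ⟨hU1, -, -, -⟩ := H.sibling_props hd hT (U := U) hU
        exact ih (d + 1) (by omega) U hU1
      rw [Finset.prod_congr rfl hprod, Finset.prod_const_one, mul_one]
    rw [hfactor]
    ring

end Hierarchy

/-- **The branching-process weights form a probability distribution on `𝒫_D`:**
`∑_{P ∈ 𝒫_D} π(P) = 1`. -/
theorem weight_sum_eq_one
    {𝒯 : Type*} [Fintype 𝒯] [DecidableEq 𝒯] [Nonempty 𝒯] {D : ℕ}
    (H : Hierarchy 𝒯 D) (ε : Finset 𝒯 → ℝ)
    (hε01 : ∀ T ∈ H.levels, 0 ≤ ε T ∧ ε T ≤ 1)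
    (hεD : ∀ T ∈ H.part D, ε T = 0) :
    ∑ P ∈ H.parts, H.weight ε P = 1 := by
  classical
  have huniv : (Finset.univ : Finset 𝒯) ∈ H.part 0 := by
    rw [H.part_zero]; exact Finset.mem_singleton_self _
  have hparts : H.parts = H.subParts Finset.univ := by
    ext P
    rw [Hierarchy.mem_subParts]
    simp only [Hierarchy.parts, Finset.mem_filter, Finset.mem_powerset, IsPartitionOn]
    constructor
    · rintro ⟨hsub, h1, h2⟩
      exact ⟨fun V hV => ⟨hsub hV, Finset.subset_univ V⟩, h1, fun t _ => h2 t⟩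
    · rintro ⟨hsub, h1, h2⟩
      exact ⟨fun V hV => (hsub V hV).1, h1, fun t => h2 t (Finset.mem_univ t)⟩
  have hanc : ∀ P, H.ancestors P = H.subAnc Finset.univ P := by
    intro P
    ext W
    rw [Hierarchy.mem_subAnc]
    simp only [Hierarchy.ancestors, Finset.mem_filter]
    constructor
    · rintro ⟨h1, h2⟩; exact ⟨h1, Finset.subset_univ W, h2⟩
    · rintro ⟨h1, -, h2⟩; exact ⟨h1, h2⟩
  have hweight : ∀ P, H.weight ε P = H.subWeight ε Finset.univ P := by
    intro P
    rw [Hierarchy.weight, Hierarchy.subWeight, hanc P]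
  rw [hparts]
  rw [Finset.sum_congr rfl fun P _ => hweight P]
  exact H.subWeight_sum_eq_one ε hεD D 0 (by omega) Finset.univ huniv
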